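/- Let V be a finite-dimensional complex inner product space and χ a non-Archimedean norm on V. Then there exists a self-adjoint endomorphism A of V such that for every nonzero v ∈ V, χ(v) = −lim_{t→∞} (1/t) · log ⟨exp(−tA) v, v⟩. -/

import Mathlib

/-- A non-Archimedean norm on a complex vector space `V` (with `ℂ` carrying the trivial
absolute value), written additively with values in `ℝ ∪ {±∞}`: `χ(v) = +∞` iff `v = 0`
(and `χ` never takes the value `-∞`), `χ(a • v) = χ(v)` for `a ≠ 0`, and
`χ(v + w) ≥ min (χ(v), χ(w))`. -/
def IsNonArchNorm {V : Type*} [AddCommGroup V] [Module ℂ V] (χ : V → EReal) : Prop :=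
  (∀ v : V, χ v ≠ ⊥) ∧ (∀ v : V, χ v = ⊤ ↔ v = 0) ∧
    (∀ a : ℂ, a ≠ 0 → ∀ v : V, χ (a • v) = χ v) ∧
    (∀ v w : V, min (χ v) (χ w) ≤ χ (v + w))

open Filter Finset Submodule Module FiniteDimensional

section Aux

variable {V : Type*} [NormedAddCommGroup V] [InnerProductSpace ℂ V] [FiniteDimensional ℂ V]

/-- exp of an operator applied to an eigenvector. -/
private lemma exp_eigen (B : V →L[ℂ] V) (μ : ℂ) (w : V) (h : B w = μ • w) :
    NormedSpace.exp B w = Complex.exp μ • w := by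
  have hpow : ∀ n : ℕ, (B ^ n) w = μ ^ n • w := by
    intro n
    induction n with
    | zero => simp
    | succ n ih =>
        rw [pow_succ, ContinuousLinearMap.mul_apply, h, map_smul, ih, smul_smul, pow_succ']
  have hs : Summable (fun n : ℕ => ((n.factorial : ℂ))⁻¹ • B ^ n) :=
    NormedSpace.expSeries_summable' B
  have h1 : NormedSpace.exp B w = ∑' n : ℕ, (((n.factorial : ℂ))⁻¹ • B ^ n) w := by
    rw [NormedSpace.exp_eq_tsum (𝕂 := ℂ)]
    simpa using (ContinuousLinearMap.apply ℂ V w).map_tsum hs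
  rw [h1]
  have h2 : ∀ n : ℕ, (((n.factorial : ℂ))⁻¹ • B ^ n) w
      = (((n.factorial : ℂ))⁻¹ * μ ^ n) • w := by
    intro n; rw [ContinuousLinearMap.smul_apply, hpow, smul_smul]
  calc ∑' n : ℕ, (((n.factorial : ℂ))⁻¹ • B ^ n) w
      = ∑' n : ℕ, (((n.factorial : ℂ))⁻¹ * μ ^ n) • w := by simp only [h2]
    _ = (∑' n : ℕ, ((n.factorial : ℂ))⁻¹ * μ ^ n) • w := by
        refine Summable.tsum_smul_const ?_ w
        simpa [smul_eq_mul] using NormedSpace.expSeries_summable' (𝕂 := ℂ) μ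
    _ = Complex.exp μ • w := by
        rw [Complex.exp_eq_exp_ℂ, NormedSpace.exp_eq_tsum (𝕂 := ℂ)]
        simp [smul_eq_mul]

variable (χ : V → EReal)

/-- The submodule of vectors of value at least `r`. -/
private def Ugeq (hχ : IsNonArchNorm χ) (r : ℝ) : Submodule ℂ V where
  carrier := {v | (r : EReal) ≤ χ v}
  zero_mem' := by
    simp only [Set.mem_setOf_eq, (hχ.2.1 0).mpr rfl]
    exact le_top
  add_mem' := fun {a b} ha hb => le_trans (le_min ha hb) (hχ.2.2.2 a b)
  smul_mem' := by
    intro a v hv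
    rcases eq_or_ne a 0 with rfl | h
    · simp only [Set.mem_setOf_eq, zero_smul, (hχ.2.1 0).mpr rfl]
      exact le_top
    · simpa only [Set.mem_setOf_eq, hχ.2.2.1 a h v] using hv

/-- The submodule of vectors of value greater than `r`. -/
private def Ugt (hχ : IsNonArchNorm χ) (r : ℝ) : Submodule ℂ V where
  carrier := {v | (r : EReal) < χ v}
  zero_mem' := by
    simp only [Set.mem_setOf_eq, (hχ.2.1 0).mpr rfl]
    exact EReal.coe_lt_top r
  add_mem' := fun {a b} ha hb => lt_of_lt_of_le (lt_min ha hb) (hχ.2.2.2 a b)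
  smul_mem' := by
    intro a v hv
    rcases eq_or_ne a 0 with rfl | h
    · simp only [Set.mem_setOf_eq, zero_smul, (hχ.2.1 0).mpr rfl]
      exact EReal.coe_lt_top r
    · simpa only [Set.mem_setOf_eq, hχ.2.2.1 a h v] using hv

private lemma mem_Ugeq (hχ : IsNonArchNorm χ) (r : ℝ) (v : V) :
    v ∈ Ugeq χ hχ r ↔ (r : EReal) ≤ χ v := Iff.rfl

private lemma mem_Ugt (hχ : IsNonArchNorm χ) (r : ℝ) (v : V) :
    v ∈ Ugt χ hχ r ↔ (r : EReal) < χ v := Iff.rfl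

private lemma Ugt_le_Ugeq (hχ : IsNonArchNorm χ) (r : ℝ) : Ugt χ hχ r ≤ Ugeq χ hχ r :=
  fun x h => (mem_Ugeq χ hχ r x).mpr (le_of_lt ((mem_Ugt χ hχ r x).mp h))

private lemma Ugeq_le_Ugt (hχ : IsNonArchNorm χ) {r s : ℝ} (h : r < s) :
    Ugeq χ hχ s ≤ Ugt χ hχ r :=
  fun _ hx => lt_of_lt_of_le (EReal.coe_lt_coe_iff.mpr h) hx

/-- The "graded piece" at value `r`. -/
private noncomputable def Wsp (hχ : IsNonArchNorm χ) (r : ℝ) : Submodule ℂ V :=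
  Ugeq χ hχ r ⊓ (Ugt χ hχ r)ᗮ

private lemma Wsp_orth (hχ : IsNonArchNorm χ) {r s : ℝ} (h : r < s) {w x : V}
    (hw : w ∈ Wsp χ hχ r) (hx : x ∈ Wsp χ hχ s) : (inner ℂ w x : ℂ) = 0 := by
  have hxU : x ∈ Ugt χ hχ r := Ugeq_le_Ugt χ hχ h hx.1
  exact Submodule.inner_left_of_mem_orthogonal hxU hw.2

private lemma Wsp_orth' (hχ : IsNonArchNorm χ) {r s : ℝ} (h : r ≠ s) {w x : V}
    (hw : w ∈ Wsp χ hχ r) (hx : x ∈ Wsp χ hχ s) : (inner ℂ w x : ℂ) = 0 := by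
  rcases lt_or_gt_of_ne h with h' | h'
  · exact Wsp_orth χ hχ h' hw hx
  · rw [← inner_conj_symm, Wsp_orth χ hχ h' hx hw, map_zero]

end Aux

/-- The purely real-analytic limit computation. -/
private lemma tendsto_neg_log_sum_exp (S : Finset ℝ) (c : ℝ → ℝ) (m : ℝ) (hm : m ∈ S)
    (hc : ∀ r ∈ S, 0 ≤ c r) (hcm : 0 < c m) (hlt : ∀ r ∈ S, r < m → c r = 0) :
    Filter.Tendsto (fun t : ℝ => -((1 / t) * Real.log (∑ r ∈ S, Real.exp (-(t * r)) * c r)))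
      Filter.atTop (nhds m) := by
  set g : ℝ → ℝ := fun t => ∑ r ∈ S, Real.exp (-(t * (r - m))) * c r with hg
  have hterm_nonneg : ∀ t : ℝ, ∀ r ∈ S, 0 ≤ Real.exp (-(t * (r - m))) * c r :=
    fun t r hr => mul_nonneg (Real.exp_nonneg _) (hc r hr)
  have hgpos : ∀ t, 0 < g t := by
    intro t
    have h1 : Real.exp (-(t * (m - m))) * c m ≤ g t :=
      Finset.single_le_sum (hterm_nonneg t) hm
    have h2 : Real.exp (-(t * (m - m))) * c m = c m := by simp
    exact lt_of_lt_of_le hcm (h2 ▸ h1)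
  have hgt : Filter.Tendsto g Filter.atTop (nhds (c m)) := by
    have hsum : Filter.Tendsto g Filter.atTop
        (nhds (∑ r ∈ S, if r = m then c m else 0)) := by
      refine tendsto_finset_sum _ (fun r hr => ?_)
      rcases eq_or_ne r m with rfl | hne
      · simpa using tendsto_const_nhds
      · simp only [hne, if_false]
        rcases lt_or_gt_of_ne hne with h' | h'
        · simpa [hlt r hr h'] using
            (tendsto_const_nhds : Filter.Tendsto (fun _ : ℝ => (0:ℝ)) Filter.atTop (nhds 0))
        · have hexp : Filter.Tendsto (fun t : ℝ => Real.exp (-(t * (r - m))))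
              Filter.atTop (nhds 0) := by
            refine Real.tendsto_exp_atBot.comp ?_
            have : Filter.Tendsto (fun t : ℝ => t * (r - m)) Filter.atTop Filter.atTop :=
              Filter.Tendsto.atTop_mul_const (by linarith) tendsto_id
            exact Filter.tendsto_neg_atBot_iff.mpr this
          simpa using hexp.mul_const (c r)
    have : (∑ r ∈ S, if r = m then c m else 0) = c m := by
      rw [Finset.sum_ite_eq' S m (fun _ => c m)]
      simp [hm]
    rwa [this] at hsum
  have hlog : Filter.Tendsto (fun t => Real.log (g t)) Filter.atTop
      (nhds (Real.log (c m))) :=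
    ((Real.continuousAt_log hcm.ne').tendsto).comp hgt
  have h0 : Filter.Tendsto (fun t : ℝ => (1 / t) * Real.log (g t)) Filter.atTop (nhds 0) := by
    have := (tendsto_inv_atTop_zero (𝕜 := ℝ)).mul hlog
    simpa [one_div] using this
  have hmain : Filter.Tendsto (fun t : ℝ => m - (1 / t) * Real.log (g t))
      Filter.atTop (nhds m) := by
    simpa using
      (tendsto_const_nhds : Filter.Tendsto (fun _ : ℝ => m) Filter.atTop (nhds m)).sub h0
  refine hmain.congr' ?_
  filter_upwards [eventually_gt_atTop (0 : ℝ)] with t ht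
  have hfg : (∑ r ∈ S, Real.exp (-(t * r)) * c r) = Real.exp (-(t * m)) * g t := by
    rw [hg, Finset.mul_sum]
    refine Finset.sum_congr rfl fun r hr => ?_
    rw [← mul_assoc, ← Real.exp_add]
    congr 2
    ring
  rw [hfg, Real.log_mul (Real.exp_ne_zero _) (hgpos t).ne', Real.log_exp]
  field_simp
  ring

/-- Let `V` be a finite-dimensional complex inner ℂ product space and
`χ` a non-Archimedean norm on `V`.  Then there exists a self-adjoint endomorphism `A`
of `V` such that for every nonzero `v ∈ V`,
`χ(v) = -lim_{t→∞} (1/t) log ⟨exp(-tA) v, v⟩`. -/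
theorem statement6 {V : Type*} [NormedAddCommGroup V] [InnerProductSpace ℂ V]
    [FiniteDimensional ℂ V]
    (χ : V → EReal) (hχ : IsNonArchNorm χ) :
    ∃ A : V →L[ℂ] V,
      (∀ x y : V, (inner ℂ (A x) y : ℂ) = inner ℂ x (A y)) ∧
      ∀ v : V, v ≠ 0 →
        Filter.Tendsto
          (fun t : ℝ =>
            ((-((1 / t) *
              Real.log ((inner ℂ ((NormedSpace.exp ((-(t : ℂ)) • A)) v) v : ℂ).re)) : ℝ) :
              EReal))
          Filter.atTop (nhds (χ v)) := by
  obtain ⟨hbot, htop, hsmul, hmin⟩ := hχ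
  have hχ' : IsNonArchNorm χ := ⟨hbot, htop, hsmul, hmin⟩
  -- each nonzero vector has a real value
  have hval : ∀ v : V, v ≠ 0 → ∃ m : ℝ, χ v = (m : EReal) := by
    intro v hv
    have h1 : χ v ≠ ⊤ := fun h => hv ((htop v).mp h)
    lift χ v to ℝ using ⟨h1, hbot v⟩ with m hm
    exact ⟨m, rfl⟩
  -- the set of values is finite
  set S : Set ℝ := {r : ℝ | ∃ v : V, v ≠ 0 ∧ χ v = (r : EReal)} with hSdef
  have hSfin : S.Finite := by
    have hanti : StrictAntiOn (fun r => finrank ℂ (Ugeq χ hχ' r)) S := by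
      intro a ha b hb hab
      obtain ⟨v, hv0, hva⟩ := ha
      have hlt : Ugeq χ hχ' b < Ugeq χ hχ' a := by
        refine lt_of_le_of_ne (fun x hx => ?_) (fun h => ?_)
        · exact Ugt_le_Ugeq χ hχ' a (Ugeq_le_Ugt χ hχ' hab hx)
        · have hva' : v ∈ Ugeq χ hχ' a := by rw [mem_Ugeq, hva]
          rw [← h] at hva'
          rw [mem_Ugeq, hva, EReal.coe_le_coe_iff] at hva'
          exact absurd hva' (not_le.mpr hab)
      exact Submodule.finrank_lt_finrank_of_lt hlt
    have himg : ((fun r => finrank ℂ (Ugeq χ hχ' r)) '' S).Finite :=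
      (Set.finite_Iic (finrank ℂ V)).subset (by
        rintro _ ⟨r, _, rfl⟩
        exact Submodule.finrank_le _)
    exact Set.Finite.of_finite_image himg hanti.injOn
  set Sf : Finset ℝ := hSfin.toFinset with hSf
  have hmemSf : ∀ r : ℝ, r ∈ Sf ↔ ∃ v : V, v ≠ 0 ∧ χ v = (r : EReal) :=
    fun r => hSfin.mem_toFinset
  -- the projections
  set P : ℝ → (V →L[ℂ] V) :=
    fun r => (Wsp χ hχ' r).subtypeL.comp (orthogonalProjection (Wsp χ hχ' r)) with hP
  have hPapp : ∀ r v, P r v = (orthogonalProjection (Wsp χ hχ' r) v : V) := fun r v => rfl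
  have hPmem : ∀ r v, P r v ∈ Wsp χ hχ' r := fun r v => SetLike.coe_mem _
  have hPself : ∀ r w, w ∈ Wsp χ hχ' r → P r w = w := by
    intro r w hw
    rw [hPapp]; exact Submodule.starProjection_eq_self_iff.mpr hw
  have hPzero : ∀ r s, r ≠ s → ∀ w ∈ Wsp χ hχ' r, P s w = 0 := by
    intro r s hrs w hw
    have hworth : w ∈ (Wsp χ hχ' s)ᗮ := by
      rw [Submodule.mem_orthogonal]
      intro u hu
      exact Wsp_orth' χ hχ' (Ne.symm hrs) hu hw
    rw [hPapp, orthogonalProjection_mem_subspace_orthogonalComplement_eq_zero hworth,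
      Submodule.coe_zero]
  -- every vector is in the span of the graded pieces
  have hspan : ∀ v : V, v ∈ ⨆ r ∈ Sf, Wsp χ hχ' r := by
    have key : ∀ n : ℕ, ∀ v : V, v ≠ 0 → ∀ m : ℝ, χ v = (m : EReal) →
        finrank ℂ (Ugeq χ hχ' m) ≤ n → v ∈ ⨆ r ∈ Sf, Wsp χ hχ' r := by
      intro n
      induction n with
      | zero =>
          intro v hv m hm hrank
          have hvU : v ∈ Ugeq χ hχ' m := by rw [mem_Ugeq, hm]
          have : Ugeq χ hχ' m = ⊥ := Submodule.finrank_eq_zero.mp (Nat.le_zero.mp hrank)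
          rw [this, Submodule.mem_bot] at hvU
          exact absurd hvU hv
      | succ n ih =>
          intro v hv m hm hrank
          have hvU : v ∈ Ugeq χ hχ' m := by rw [mem_Ugeq, hm]
          have hdec : Ugt χ hχ' m ⊔ (Ugt χ hχ' m)ᗮ ⊓ Ugeq χ hχ' m = Ugeq χ hχ' m :=
            Submodule.sup_orthogonal_inf_of_hasOrthogonalProjection (Ugt_le_Ugeq χ hχ' m)
          rw [← hdec] at hvU
          obtain ⟨v', hv', w, hw, hvw⟩ := Submodule.mem_sup.mp hvU
          have hmS : m ∈ Sf := (hmemSf m).mpr ⟨v, hv, hm⟩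
          have hwW : w ∈ Wsp χ hχ' m := ⟨hw.2, hw.1⟩
          have hwT : w ∈ ⨆ r ∈ Sf, Wsp χ hχ' r :=
            (le_iSup₂ (f := fun r _ => Wsp χ hχ' r) m hmS) hwW
          have hstrict : Ugt χ hχ' m < Ugeq χ hχ' m := by
            refine lt_of_le_of_ne (Ugt_le_Ugeq χ hχ' m) (fun h => ?_)
            have : v ∈ Ugt χ hχ' m := by
              rw [h, mem_Ugeq, hm]
            rw [mem_Ugt, hm] at this
            exact absurd this (lt_irrefl _)
          have hv'T : v' ∈ ⨆ r ∈ Sf, Wsp χ hχ' r := by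
            rcases eq_or_ne v' 0 with rfl | hne
            · exact Submodule.zero_mem _
            · obtain ⟨m', hm'⟩ := hval v' hne
              have hmm' : m < m' := by
                have := hv'
                rw [mem_Ugt, hm'] at this
                exact EReal.coe_lt_coe_iff.mp this
              refine ih v' hne m' hm' ?_
              have h1 : Ugeq χ hχ' m' ≤ Ugt χ hχ' m := Ugeq_le_Ugt χ hχ' hmm'
              have h2 : finrank ℂ (Ugeq χ hχ' m') ≤ finrank ℂ (Ugt χ hχ' m) :=
                Submodule.finrank_mono h1
              have h3 : finrank ℂ (Ugt χ hχ' m) < finrank ℂ (Ugeq χ hχ' m) :=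
                Submodule.finrank_lt_finrank_of_lt hstrict
              omega
          rw [← hvw]
          exact Submodule.add_mem _ hv'T hwT
    intro v
    rcases eq_or_ne v 0 with rfl | hv
    · exact Submodule.zero_mem _
    · obtain ⟨m, hm⟩ := hval v hv
      exact key (finrank ℂ (Ugeq χ hχ' m)) v hv m hm le_rfl
  -- sum of projections is the identity
  have hQ : ∀ v : V, ∑ r ∈ Sf, P r v = v := by
    have hker : ∀ s ∈ Sf, Wsp χ hχ' s ≤
        LinearMap.ker ((∑ r ∈ Sf, P r : V →L[ℂ] V).toLinearMap - LinearMap.id) := by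
      intro s hs w hw
      rw [LinearMap.mem_ker, LinearMap.sub_apply, LinearMap.id_apply, sub_eq_zero,
        ContinuousLinearMap.coe_coe, ContinuousLinearMap.sum_apply]
      rw [Finset.sum_eq_single s (fun r hr hrs => hPzero s r (Ne.symm hrs) w hw)
        (fun h => absurd hs h)]
      exact hPself s w hw
    intro v
    have hv := hspan v
    have hle : (⨆ r ∈ Sf, Wsp χ hχ' r) ≤
        LinearMap.ker ((∑ r ∈ Sf, P r : V →L[ℂ] V).toLinearMap - LinearMap.id) :=
      iSup₂_le hker
    have := hle hv
    rw [LinearMap.mem_ker, LinearMap.sub_apply, LinearMap.id_apply, sub_eq_zero,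
      ContinuousLinearMap.coe_coe, ContinuousLinearMap.sum_apply] at this
    exact this
  -- the operator A
  refine ⟨∑ r ∈ Sf, (r : ℂ) • P r, ?_, ?_⟩
  · -- self-adjointness
    intro x y
    rw [ContinuousLinearMap.sum_apply, ContinuousLinearMap.sum_apply, sum_inner, inner_sum]
    refine Finset.sum_congr rfl fun r _ => ?_
    rw [ContinuousLinearMap.smul_apply, ContinuousLinearMap.smul_apply, inner_smul_left,
      inner_smul_right, Complex.conj_ofReal]
    congr 1
    exact Submodule.inner_starProjection_left_eq_right (Wsp χ hχ' r) x y
  · -- the limit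
    intro v hv
    obtain ⟨m, hm⟩ := hval v hv
    have hmS : m ∈ Sf := (hmemSf m).mpr ⟨v, hv, hm⟩
    set A : V →L[ℂ] V := ∑ r ∈ Sf, (r : ℂ) • P r with hA
    -- eigenvalue property
    have hAeigen : ∀ r ∈ Sf, ∀ w ∈ Wsp χ hχ' r, A w = (r : ℂ) • w := by
      intro r hr w hw
      rw [hA, ContinuousLinearMap.sum_apply]
      rw [Finset.sum_eq_single r
        (fun s _ hsr => by
          rw [ContinuousLinearMap.smul_apply, hPzero r s (Ne.symm hsr) w hw, smul_zero])
        (fun h => absurd hr h)]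
      rw [ContinuousLinearMap.smul_apply, hPself r w hw]
    -- exponential on components
    have hexp : ∀ t : ℝ, ∀ r ∈ Sf, ∀ w ∈ Wsp χ hχ' r,
        NormedSpace.exp ((-(t : ℂ)) • A) w = ((Real.exp (-(t * r)) : ℝ) : ℂ) • w := by
      intro t r hr w hw
      have hB : ((-(t : ℂ)) • A) w = ((-(t * r) : ℝ) : ℂ) • w := by
        rw [ContinuousLinearMap.smul_apply, hAeigen r hr w hw, smul_smul]
        congr 1
        push_cast
        ring
      rw [exp_eigen ((-(t : ℂ)) • A) _ w hB, ← Complex.ofReal_exp]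
    -- components of v
    have hPv0 : ∀ r ∈ Sf, r < m → P r v = 0 := by
      intro r _ hrm
      have hvgt : v ∈ Ugt χ hχ' r := by
        rw [mem_Ugt, hm]
        exact EReal.coe_lt_coe_iff.mpr hrm
      have hvorth : v ∈ (Wsp χ hχ' r)ᗮ := by
        rw [Submodule.mem_orthogonal]
        intro u hu
        exact Submodule.inner_left_of_mem_orthogonal hvgt hu.2
      rw [hPapp, orthogonalProjection_mem_subspace_orthogonalComplement_eq_zero hvorth,
        Submodule.coe_zero]
    have hPvm : P m v ≠ 0 := by
      intro h0
      have : v ∈ Ugt χ hχ' m := by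
        rw [← hQ v]
        refine Submodule.sum_mem _ (fun s hs => ?_)
        rcases lt_trichotomy s m with h' | rfl | h'
        · rw [hPv0 s hs h']; exact Submodule.zero_mem _
        · rw [h0]; exact Submodule.zero_mem _
        · exact Ugeq_le_Ugt χ hχ' h' (hPmem s v).1
      rw [mem_Ugt, hm] at this
      exact absurd this (lt_irrefl _)
    -- the inner ℂ product formula
    have hip : ∀ r : ℝ, (inner ℂ (P r v) v : ℂ) = ((‖P r v‖ ^ 2 : ℝ) : ℂ) := by
      intro r
      have h1 : (inner ℂ (P r v) (v - P r v) : ℂ) = 0 :=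
        Submodule.inner_right_of_mem_orthogonal (hPmem r v)
          (Submodule.sub_starProjection_mem_orthogonal (K := Wsp χ hχ' r) v)
      have h2 : (inner ℂ (P r v) v : ℂ) = inner ℂ (P r v) (P r v) + inner ℂ (P r v) (v - P r v) := by
        rw [← inner_add_right, add_sub_cancel]
      rw [h2, h1, add_zero, inner_self_eq_norm_sq_to_K]
      norm_cast
    have hinner : ∀ t : ℝ,
        ((inner ℂ ((NormedSpace.exp ((-(t : ℂ)) • A)) v) v : ℂ)).re
          = ∑ r ∈ Sf, Real.exp (-(t * r)) * ‖P r v‖ ^ 2 := by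
      intro t
      have hv1 : NormedSpace.exp ((-(t : ℂ)) • A) v
          = ∑ r ∈ Sf, ((Real.exp (-(t * r)) : ℝ) : ℂ) • P r v := by
        conv_lhs => rw [← hQ v, map_sum]
        exact Finset.sum_congr rfl fun r hr => hexp t r hr (P r v) (hPmem r v)
      rw [hv1, sum_inner]
      have : ∀ r ∈ Sf, (inner ℂ (((Real.exp (-(t * r)) : ℝ) : ℂ) • P r v) v : ℂ)
          = ((Real.exp (-(t * r)) * ‖P r v‖ ^ 2 : ℝ) : ℂ) := by
        intro r _
        rw [inner_smul_left, Complex.conj_ofReal, hip r]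
        push_cast
        ring
      rw [Finset.sum_congr rfl this]
      rw [Complex.re_sum]
      refine Finset.sum_congr rfl fun r _ => ?_
      rw [Complex.ofReal_re]
    -- conclude via the real-analytic lemma
    have hreal : Filter.Tendsto
        (fun t : ℝ => -((1 / t) *
          Real.log ((inner ℂ ((NormedSpace.exp ((-(t : ℂ)) • A)) v) v : ℂ).re)))
        Filter.atTop (nhds m) := by
      have := tendsto_neg_log_sum_exp Sf (fun r => ‖P r v‖ ^ 2) m hmS
        (fun r _ => sq_nonneg _)
        (pow_pos (norm_pos_iff.mpr hPvm) 2)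
        (fun r hr hrm => by show ‖P r v‖ ^ 2 = 0; rw [hPv0 r hr hrm]; simp)
      refine this.congr fun t => ?_
      simp only [hinner t]
    rw [hm]
    rw [show (nhds ((m : ℝ) : EReal)) = nhds ((m : ℝ) : EReal) from rfl]
    exact (EReal.tendsto_coe (m := fun t : ℝ => -((1 / t) *
      Real.log ((inner ℂ ((NormedSpace.exp ((-(t : ℂ)) • A)) v) v : ℂ).re)))).mpr hreal
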